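/- Let F belong to the class Γ₀ with auxiliary function ρ_F, and define G(s) = F(s²). Then G belongs to Γ₀ with auxiliary function ρ_G(s) = ρ_F(s²)/(2s); that is, for every x ∈ ℝ, G(s + x·ρ_G(s))/G(s) → exp(x) as s → 0⁺, ρ_G(s)/s → 0, and ρ_G is self-neglecting at 0. -/

import Mathlib

open Filter Set Real

section Gamma0Aux

variable {F ρ : ℝ → ℝ} {δ : ℝ}

private lemma gamma_rho_nonneg_ev (hδpos : 0 < δ)
    (hρnn : ∀ s ∈ Set.Ico (0:ℝ) δ, 0 ≤ ρ s) :
    ∀ᶠ t in nhdsWithin 0 (Set.Ioi 0), 0 ≤ ρ t ∧ t < δ := by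
  filter_upwards [Ioo_mem_nhdsGT_of_mem (left_mem_Ico.2 hδpos)] with t ht
  exact ⟨hρnn t ⟨ht.1.le, ht.2⟩, ht.2⟩

private lemma gamma_rho_div_tendsto
    (hFneg : ∀ s ≤ (0:ℝ), F s = 0) (hFpos : ∀ s > (0:ℝ), 0 < F s)
    (hδpos : 0 < δ) (hρnn : ∀ s ∈ Set.Ico (0:ℝ) δ, 0 ≤ ρ s)
    (hlim : ∀ x : ℝ, Tendsto (fun s => F (s + x * ρ s) / F s) (nhdsWithin 0 (Set.Ioi 0))
      (nhds (Real.exp x))) :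
    Tendsto (fun t => ρ t / t) (nhdsWithin 0 (Set.Ioi 0)) (nhds 0) := by
  rw [NormedAddCommGroup.tendsto_nhds_zero]
  intro ε hε
  have h1 : ∀ᶠ t in nhdsWithin 0 (Set.Ioi 0),
      0 < F (t + (-(1/ε)) * ρ t) / F t :=
    (hlim (-(1/ε))).eventually_const_lt (exp_pos _)
  filter_upwards [h1, gamma_rho_nonneg_ev hδpos hρnn, self_mem_nhdsWithin]
    with t hrat ⟨hρt, _⟩ ht
  have htpos : (0:ℝ) < t := ht
  have hFt : 0 < F t := hFpos t htpos
  have hnum : 0 < F (t + (-(1/ε)) * ρ t) := by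
    by_contra hc
    push_neg at hc
    have := div_nonpos_of_nonpos_of_nonneg hc hFt.le
    linarith
  have harg : 0 < t + (-(1/ε)) * ρ t := by
    by_contra hc
    push_neg at hc
    rw [hFneg _ hc] at hnum
    exact lt_irrefl _ hnum
  have h2 : ρ t < ε * t := by
    have h3 := mul_pos hε harg
    have h4 : ε * (t + (-(1/ε)) * ρ t) = ε * t - ρ t := by
      field_simp
      ring
    rw [h4] at h3
    linarith
  have h0 : 0 ≤ ρ t / t := div_nonneg hρt htpos.le
  rw [Real.norm_eq_abs, abs_of_nonneg h0, div_lt_iff₀ htpos]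
  linarith

private lemma gamma_u_tendsto
    (hFneg : ∀ s ≤ (0:ℝ), F s = 0) (hFpos : ∀ s > (0:ℝ), 0 < F s)
    (hδpos : 0 < δ) (hρnn : ∀ s ∈ Set.Ico (0:ℝ) δ, 0 ≤ ρ s)
    (hlim : ∀ x : ℝ, Tendsto (fun s => F (s + x * ρ s) / F s) (nhdsWithin 0 (Set.Ioi 0))
      (nhds (Real.exp x))) (x : ℝ) :
    Tendsto (fun t => t + x * ρ t) (nhdsWithin 0 (Set.Ioi 0)) (nhdsWithin 0 (Set.Ioi 0)) := by
  have hA := gamma_rho_div_tendsto hFneg hFpos hδpos hρnn hlim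
  have hρ0 : Tendsto ρ (nhdsWithin 0 (Set.Ioi 0)) (nhds 0) := by
    have ht : Tendsto (fun t : ℝ => t) (nhdsWithin 0 (Set.Ioi 0)) (nhds 0) :=
      tendsto_id.mono_left nhdsWithin_le_nhds |>.congr (fun _ => rfl)
    have := hA.mul ht
    rw [mul_zero] at this
    refine this.congr' ?_
    filter_upwards [self_mem_nhdsWithin] with t htt
    have : (t:ℝ) ≠ 0 := ne_of_gt htt
    field_simp
  apply tendsto_nhdsWithin_iff.2
  constructor
  · have h1 : Tendsto (fun t : ℝ => t + x * ρ t) (nhdsWithin 0 (Set.Ioi 0)) (nhds (0 + x * 0)) :=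
      (tendsto_id.mono_left nhdsWithin_le_nhds).add ((tendsto_const_nhds).mul hρ0)
    simpa using h1
  · have hsmall : ∀ᶠ t in nhdsWithin 0 (Set.Ioi 0), ρ t / t < 1 / (|x| + 1) :=
      hA.eventually_lt_const (by positivity)
    filter_upwards [hsmall, self_mem_nhdsWithin, gamma_rho_nonneg_ev hδpos hρnn]
      with t h2 ht ⟨hρt, _⟩
    have htpos : (0:ℝ) < t := ht
    have hx1 : (0:ℝ) < |x| + 1 := by positivity
    rw [div_lt_div_iff₀ htpos hx1] at h2
    have h3 : |x| * ρ t < t := by nlinarith [abs_nonneg x]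
    have h4 : -(|x| * ρ t) ≤ x * ρ t := by
      nlinarith [neg_abs_le x, abs_nonneg x]
    show (0:ℝ) < t + x * ρ t
    linarith

private lemma gamma_rho_pos_ev
    (hFpos : ∀ s > (0:ℝ), 0 < F s)
    (hδpos : 0 < δ) (hρnn : ∀ s ∈ Set.Ico (0:ℝ) δ, 0 ≤ ρ s)
    (hlim : ∀ x : ℝ, Tendsto (fun s => F (s + x * ρ s) / F s) (nhdsWithin 0 (Set.Ioi 0))
      (nhds (Real.exp x))) :
    ∀ᶠ t in nhdsWithin 0 (Set.Ioi 0), 0 < ρ t := by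
  have h1 : ∀ᶠ t in nhdsWithin 0 (Set.Ioi 0),
      1 < F (t + 1 * ρ t) / F t := (hlim 1).eventually_const_lt (by
        have := Real.exp_one_gt_d9; linarith)
  filter_upwards [h1, self_mem_nhdsWithin, gamma_rho_nonneg_ev hδpos hρnn]
    with t h2 ht ⟨hρt, _⟩
  rcases eq_or_lt_of_le hρt with h | h
  · exfalso
    rw [← h] at h2
    simp only [mul_zero, add_zero] at h2
    rw [div_self (hFpos t ht).ne'] at h2
    exact lt_irrefl _ h2
  · exact h

private lemma gamma_sn_upper
    (hFneg : ∀ s ≤ (0:ℝ), F s = 0) (hFmono : Monotone F) (hFpos : ∀ s > (0:ℝ), 0 < F s)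
    (hδpos : 0 < δ) (hρnn : ∀ s ∈ Set.Ico (0:ℝ) δ, 0 ≤ ρ s)
    (hlim : ∀ x : ℝ, Tendsto (fun s => F (s + x * ρ s) / F s) (nhdsWithin 0 (Set.Ioi 0))
      (nhds (Real.exp x))) (x c : ℝ) (hc : 1 < c) :
    ∀ᶠ t in nhdsWithin 0 (Set.Ioi 0), ρ (t + x * ρ t) ≤ c * ρ t := by
  by_contra hcon
  rw [Filter.not_eventually] at hcon
  have hfreq : ∃ᶠ t in nhdsWithin 0 (Set.Ioi 0), c * ρ t < ρ (t + x * ρ t) :=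
    hcon.mono (fun t ht => lt_of_not_ge ht)
  have hu := gamma_u_tendsto hFneg hFpos hδpos hρnn hlim x
  have hf : Tendsto
      (fun t => (F ((t + x * ρ t) + 1 * ρ (t + x * ρ t)) / F (t + x * ρ t)) *
        (F (t + x * ρ t) / F t))
      (nhdsWithin 0 (Set.Ioi 0)) (nhds (Real.exp 1 * Real.exp x)) :=
    ((hlim 1).comp hu).mul (hlim x)
  have hg := hlim (x + c)
  have hlt : ∀ᶠ t in nhdsWithin 0 (Set.Ioi 0),
      0 < (fun t => F (t + (x + c) * ρ t) / F t) t -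
        (fun t => (F ((t + x * ρ t) + 1 * ρ (t + x * ρ t)) / F (t + x * ρ t)) *
          (F (t + x * ρ t) / F t)) t := by
    apply (hg.sub hf).eventually_const_lt
    rw [← Real.exp_add]
    have : 1 + x < x + c := by linarith
    exact sub_pos.2 (Real.exp_lt_exp.2 this)
  have := (hfreq.and_eventually (hlt.and (hu.eventually self_mem_nhdsWithin))).and_eventually
    self_mem_nhdsWithin
  obtain ⟨t, ⟨hρu, hlt', hupos⟩, ht⟩ := this.exists
  have htpos : (0:ℝ) < t := ht
  have hFt : 0 < F t := hFpos t htpos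
  have hFu : 0 < F (t + x * ρ t) := hFpos _ hupos
  simp only at hlt'
  rw [div_mul_div_cancel₀ hFu.ne'] at hlt'
  have hmon : F (t + (x + c) * ρ t) ≤ F ((t + x * ρ t) + 1 * ρ (t + x * ρ t)) := by
    apply hFmono
    nlinarith
  have : F (t + (x + c) * ρ t) / F t ≤ F ((t + x * ρ t) + 1 * ρ (t + x * ρ t)) / F t := by
    gcongr
  linarith

private lemma gamma_sn_lower
    (hFneg : ∀ s ≤ (0:ℝ), F s = 0) (hFmono : Monotone F) (hFpos : ∀ s > (0:ℝ), 0 < F s)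
    (hδpos : 0 < δ) (hρnn : ∀ s ∈ Set.Ico (0:ℝ) δ, 0 ≤ ρ s)
    (hlim : ∀ x : ℝ, Tendsto (fun s => F (s + x * ρ s) / F s) (nhdsWithin 0 (Set.Ioi 0))
      (nhds (Real.exp x))) (x c : ℝ) (hc : c < 1) :
    ∀ᶠ t in nhdsWithin 0 (Set.Ioi 0), c * ρ t ≤ ρ (t + x * ρ t) := by
  have hu := gamma_u_tendsto hFneg hFpos hδpos hρnn hlim x
  rcases le_or_gt c 0 with hc0 | hc0
  · filter_upwards [gamma_rho_nonneg_ev hδpos hρnn,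
      hu.eventually (gamma_rho_nonneg_ev hδpos hρnn)] with t ⟨h1, _⟩ ⟨h2, _⟩
    nlinarith
  by_contra hcon
  rw [Filter.not_eventually] at hcon
  have hfreq : ∃ᶠ t in nhdsWithin 0 (Set.Ioi 0), ρ (t + x * ρ t) < c * ρ t :=
    hcon.mono (fun t ht => lt_of_not_ge ht)
  have hf : Tendsto
      (fun t => (F ((t + x * ρ t) + 1 * ρ (t + x * ρ t)) / F (t + x * ρ t)) *
        (F (t + x * ρ t) / F t))
      (nhdsWithin 0 (Set.Ioi 0)) (nhds (Real.exp 1 * Real.exp x)) :=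
    ((hlim 1).comp hu).mul (hlim x)
  have hg := hlim (x + c)
  have hlt : ∀ᶠ t in nhdsWithin 0 (Set.Ioi 0),
      0 < (fun t => (F ((t + x * ρ t) + 1 * ρ (t + x * ρ t)) / F (t + x * ρ t)) *
          (F (t + x * ρ t) / F t)) t -
        (fun t => F (t + (x + c) * ρ t) / F t) t := by
    apply (hf.sub hg).eventually_const_lt
    rw [← Real.exp_add]
    have : x + c < 1 + x := by linarith
    exact sub_pos.2 (Real.exp_lt_exp.2 this)
  have := (hfreq.and_eventually (hlt.and (hu.eventually self_mem_nhdsWithin))).and_eventually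
    self_mem_nhdsWithin
  obtain ⟨t, ⟨hρu, hlt', hupos⟩, ht⟩ := this.exists
  have htpos : (0:ℝ) < t := ht
  have hFt : 0 < F t := hFpos t htpos
  have hFu : 0 < F (t + x * ρ t) := hFpos _ hupos
  simp only at hlt'
  rw [div_mul_div_cancel₀ hFu.ne'] at hlt'
  have hmon : F ((t + x * ρ t) + 1 * ρ (t + x * ρ t)) ≤ F (t + (x + c) * ρ t) := by
    apply hFmono
    nlinarith
  have : F ((t + x * ρ t) + 1 * ρ (t + x * ρ t)) / F t ≤ F (t + (x + c) * ρ t) / F t := by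
    gcongr
  linarith

private lemma gamma_sn_pt
    (hFneg : ∀ s ≤ (0:ℝ), F s = 0) (hFmono : Monotone F) (hFpos : ∀ s > (0:ℝ), 0 < F s)
    (hδpos : 0 < δ) (hρnn : ∀ s ∈ Set.Ico (0:ℝ) δ, 0 ≤ ρ s)
    (hlim : ∀ x : ℝ, Tendsto (fun s => F (s + x * ρ s) / F s) (nhdsWithin 0 (Set.Ioi 0))
      (nhds (Real.exp x))) (x : ℝ) :
    Tendsto (fun t => ρ (t + x * ρ t) / ρ t) (nhdsWithin 0 (Set.Ioi 0)) (nhds 1) := by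
  rw [Metric.tendsto_nhds]
  intro ε hε
  filter_upwards [gamma_sn_upper hFneg hFmono hFpos hδpos hρnn hlim x (1 + ε/2) (by linarith),
    gamma_sn_lower hFneg hFmono hFpos hδpos hρnn hlim x (1 - ε/2) (by linarith),
    gamma_rho_pos_ev hFpos hδpos hρnn hlim] with t hub hlb hρt
  rw [Real.dist_eq, abs_lt]
  constructor
  · have : 1 - ε/2 ≤ ρ (t + x * ρ t) / ρ t := by
      rw [le_div_iff₀ hρt]; nlinarith
    linarith
  · have : ρ (t + x * ρ t) / ρ t ≤ 1 + ε/2 := by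
      rw [div_le_iff₀ hρt]; nlinarith
    linarith

end Gamma0Aux

/-- `F` belongs to the class `Γ₀` with auxiliary function `ρ` :
`F` is nonnegative, vanishes on `(-∞,0]`, is nondecreasing, right-continuous,
`F 0 = 0`, `F s > 0` for `s > 0`; `ρ` is continuous, nondecreasing and nonnegative
on a right-neighborhood of `0` with `ρ 0 = 0`; and for every `x : ℝ`,
`F (s + x * ρ s) / F s → exp x` as `s → 0⁺`. -/
def MemGamma0 (F ρ : ℝ → ℝ) : Prop :=
  (∀ s, 0 ≤ F s) ∧
  (∀ s ≤ (0 : ℝ), F s = 0) ∧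
  Monotone F ∧
  (∀ s, ContinuousWithinAt F (Set.Ici s) s) ∧
  F 0 = 0 ∧
  (∀ s > (0 : ℝ), 0 < F s) ∧
  (∃ δ > (0 : ℝ), ContinuousOn ρ (Set.Ico 0 δ) ∧ MonotoneOn ρ (Set.Ico 0 δ) ∧
    ∀ s ∈ Set.Ico (0 : ℝ) δ, 0 ≤ ρ s) ∧
  ρ 0 = 0 ∧
  (∀ x : ℝ, Tendsto (fun s => F (s + x * ρ s) / F s) (nhdsWithin 0 (Set.Ioi 0))
    (nhds (Real.exp x)))

set_option maxHeartbeats 1000000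

/-- If `F ∈ Γ₀` with auxiliary function `ρF`, then `G s = F (s²)` belongs to `Γ₀` with
auxiliary function `ρG s = ρF (s²) / (2 s)` : `G (s + x * ρG s) / G s → exp x` as
`s → 0⁺` for every `x`, `ρG s / s → 0`, and `ρG` is self-neglecting at `0`. -/
theorem gamma0_of_square (F ρF : ℝ → ℝ) (h : MemGamma0 F ρF) :
    (∀ x : ℝ,
      Tendsto (fun s => F ((s + x * (ρF (s ^ 2) / (2 * s))) ^ 2) / F (s ^ 2))
        (nhdsWithin 0 (Set.Ioi 0)) (nhds (Real.exp x))) ∧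
    Tendsto (fun s => (ρF (s ^ 2) / (2 * s)) / s) (nhdsWithin 0 (Set.Ioi 0)) (nhds 0) ∧
    TendstoLocallyUniformly
      (fun s x =>
        (ρF ((s + x * (ρF (s ^ 2) / (2 * s))) ^ 2) /
            (2 * (s + x * (ρF (s ^ 2) / (2 * s))))) /
          (ρF (s ^ 2) / (2 * s)))
      (fun _ => (1 : ℝ)) (nhdsWithin 0 (Set.Ioi 0)) := by
  obtain ⟨hF0, hFneg, hFmono, hFrc, hF00, hFpos, ⟨δ, hδpos, hρcont, hρmono, hρnn⟩, hρ0, hlim⟩ := h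
  have hsq : Tendsto (fun s : ℝ => s ^ 2) (nhdsWithin 0 (Set.Ioi 0))
      (nhdsWithin 0 (Set.Ioi 0)) := by
    apply tendsto_nhdsWithin_iff.2
    constructor
    · have : Tendsto (fun s : ℝ => s ^ 2) (nhds 0) (nhds 0) := by
        simpa using (continuous_pow 2).tendsto (0:ℝ)
      exact this.mono_left nhdsWithin_le_nhds
    · filter_upwards [self_mem_nhdsWithin] with s hs
      exact pow_pos (show (0:ℝ) < s from hs) 2
  have hA := gamma_rho_div_tendsto hFneg hFpos hδpos hρnn hlim
  -- Part 2
  have part2 : Tendsto (fun s => (ρF (s ^ 2) / (2 * s)) / s)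
      (nhdsWithin 0 (Set.Ioi 0)) (nhds 0) := by
    have h1 := (hA.comp hsq).div_const 2
    rw [zero_div] at h1
    refine h1.congr (fun s => ?_)
    show ρF (s^2) / s^2 / 2 = ρF (s^2) / (2*s) / s
    rw [div_div, div_div]
    ring_nf
  -- Part 1
  have part1 : ∀ x : ℝ,
      Tendsto (fun s => F ((s + x * (ρF (s ^ 2) / (2 * s))) ^ 2) / F (s ^ 2))
        (nhdsWithin 0 (Set.Ioi 0)) (nhds (Real.exp x)) := by
    intro x
    rw [Metric.tendsto_nhds]
    intro η hη
    have hexppos := Real.exp_pos x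
    set ε' := Real.log (1 + η / (2 * Real.exp x)) with hε'def
    have hq : 0 < η / (2 * Real.exp x) := by positivity
    have hε' : 0 < ε' := Real.log_pos (by linarith)
    have hexp : Real.exp (x + ε') = Real.exp x + η / 2 := by
      rw [Real.exp_add, hε'def, Real.exp_log (by linarith)]
      field_simp
    have hlow := hsq.eventually (Metric.tendsto_nhds.1 (hlim x) (η/2) (by linarith))
    have hup := hsq.eventually (Metric.tendsto_nhds.1 (hlim (x + ε')) (η/2) (by linarith))
    have hsm := hsq.eventually (hA.eventually_lt_const
      (show (0:ℝ) < 4*ε'/(x^2+1) by positivity))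
    filter_upwards [hlow, hup, hsm, self_mem_nhdsWithin,
      hsq.eventually (gamma_rho_nonneg_ev hδpos hρnn)] with s h1 h2 h3 hs hnn
    obtain ⟨hrt, _⟩ := hnn
    have hs0 : (0:ℝ) < s := hs
    have hts : (0:ℝ) < s^2 := by positivity
    have hsne : s ≠ 0 := ne_of_gt hs0
    have hident : (s + x * (ρF (s^2) / (2*s)))^2
        = s^2 + (x + x^2 * (ρF (s^2)/(s^2))/4) * ρF (s^2) := by
      field_simp
      ring
    have hd : 0 ≤ ρF (s^2)/(s^2) := div_nonneg hrt hts.le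
    have hx1 : (0:ℝ) < x^2+1 := by positivity
    have hcl : x ≤ x + x^2 * (ρF (s^2)/(s^2))/4 := by nlinarith [sq_nonneg x]
    have hcu : x + x^2 * (ρF (s^2)/(s^2))/4 ≤ x + ε' := by
      rw [lt_div_iff₀ hx1] at h3
      nlinarith [sq_nonneg x]
    have hFt : 0 < F (s^2) := hFpos _ hts
    have hb1 : F (s^2 + x * ρF (s^2)) ≤ F ((s + x * (ρF (s^2)/(2*s)))^2) := by
      rw [hident]
      exact hFmono (by nlinarith [mul_le_mul_of_nonneg_right hcl hrt])
    have hb2 : F ((s + x * (ρF (s^2)/(2*s)))^2) ≤ F (s^2 + (x + ε') * ρF (s^2)) := by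
      rw [hident]
      exact hFmono (by nlinarith [mul_le_mul_of_nonneg_right hcu hrt])
    have hr1 : F (s^2 + x * ρF (s^2)) / F (s^2)
        ≤ F ((s + x * (ρF (s^2)/(2*s)))^2) / F (s^2) := by gcongr
    have hr2 : F ((s + x * (ρF (s^2)/(2*s)))^2) / F (s^2)
        ≤ F (s^2 + (x + ε') * ρF (s^2)) / F (s^2) := by gcongr
    rw [Real.dist_eq, abs_lt] at h1 h2 ⊢
    constructor
    · linarith [h1.1]
    · linarith [h2.2]
  refine ⟨part1, part2, ?_⟩
  -- Part 3
  rw [Metric.tendstoLocallyUniformly_iff]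
  intro ε hε x
  refine ⟨Metric.ball x 1, Metric.ball_mem_nhds x one_pos, ?_⟩
  set M := |x| + 1 with hMdef
  have hM : (0:ℝ) < M := by positivity
  have hM1 : (1:ℝ) ≤ M := by
    have := abs_nonneg x; rw [hMdef]; linarith
  set ε₁ := min (ε/4) (1/2) with hε₁def
  have hε₁ : 0 < ε₁ := lt_min (by linarith) (by norm_num)
  have hε₁a : ε₁ ≤ ε/4 := min_le_left _ _
  have hε₁b : ε₁ ≤ 1/2 := min_le_right _ _
  clear_value M ε₁
  have E2 := hsq.eventually (gamma_rho_pos_ev hFpos hδpos hρnn hlim)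
  have E3u := hsq.eventually ((gamma_u_tendsto hFneg hFpos hδpos hρnn hlim (M+1)).eventually
    (gamma_rho_nonneg_ev hδpos hρnn))
  have E3s := hsq.eventually (gamma_rho_nonneg_ev hδpos hρnn)
  have E4 := hsq.eventually (Metric.tendsto_nhds.1
    (gamma_sn_pt hFneg hFmono hFpos hδpos hρnn hlim (M+1)) ε₁ hε₁)
  have E5 := hsq.eventually (Metric.tendsto_nhds.1
    (gamma_sn_pt hFneg hFmono hFpos hδpos hρnn hlim (-M)) ε₁ hε₁)
  have E6 := part2.eventually_lt_const (show (0:ℝ) < (ε₁/2)/M by positivity)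
  have E7 := hsq.eventually (hA.eventually_lt_const (show (0:ℝ) < 4/M^2 by positivity))
  filter_upwards [E2, E3u, E3s, E4, E5, E6, E7, self_mem_nhdsWithin]
    with s hρpos hE3u hE3s h4 h5 h6 h7 hs
  obtain ⟨hρu_nn, hδu⟩ := hE3u
  obtain ⟨hρs_nn, hδs⟩ := hE3s
  intro y hy
  have hs0 : (0:ℝ) < s := hs
  have hyM : |y| ≤ M := by
    have h1 : |y| - |x| ≤ |y - x| := abs_sub_abs_le_abs_sub y x
    rw [Metric.mem_ball, Real.dist_eq] at hy
    rw [hMdef]; linarith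
  obtain ⟨hyl, hyu⟩ := abs_le.mp hyM
  set rG := ρF (s^2) / (2*s) with hrG
  have hrGpos : 0 < rG := div_pos hρpos (by linarith)
  clear_value rG
  set u := s + y * rG with hu
  clear_value u
  have h6' : M * rG < (ε₁/2) * s := by
    rw [div_lt_div_iff₀ hs0 hM] at h6
    linarith
  have hyrG_ub : y * rG ≤ M * rG := mul_le_mul_of_nonneg_right hyu hrGpos.le
  have hyrG_lb : -M * rG ≤ y * rG := mul_le_mul_of_nonneg_right hyl hrGpos.le
  have hq : M * rG < s/4 := by
    have := mul_le_mul_of_nonneg_right hε₁b hs0.le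
    linarith
  have hupos : 0 < u := by rw [hu]; linarith
  have hslb : 0 < s - M * rG := by linarith
  have hkey : 2 * s * rG = ρF (s^2) := by
    rw [hrG]; field_simp
  have hkeyM : M * (2 * s * rG) = M * ρF (s^2) := by rw [hkey]
  have hE7' : ρF (s^2) * M^2 < 4 * s^2 := by
    rw [div_lt_div_iff₀ (by positivity) (by positivity)] at h7
    linarith
  have hkeyM2 : M^2 * (2 * s * rG) = M^2 * ρF (s^2) := by rw [hkey]
  have h8 : M^2 * rG < 2 * s := by
    have hh : (2*s) * (M^2*rG) < (2*s) * (2*s) := by linarith [hkeyM2, hE7']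
    exact lt_of_mul_lt_mul_left hh (by positivity)
  have hMrG2 : M^2 * rG^2 ≤ ρF (s^2) := by
    have := mul_le_mul_of_nonneg_right h8.le hrGpos.le
    linarith [hkey]
  have hu2_ub : u^2 ≤ s^2 + (M+1) * ρF (s^2) := by
    have h9 : u ≤ s + M * rG := by rw [hu]; linarith
    have h10 : u^2 ≤ (s + M*rG)^2 := by
      have := pow_le_pow_left₀ hupos.le h9 2
      simpa using this
    have hexp2 : (s + M*rG)^2 = s^2 + M*(2*s*rG) + M^2*rG^2 := by ring
    rw [hexp2, hkeyM] at h10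
    linarith [hMrG2, hρs_nn]
  have hu2_lb : s^2 + (-M) * ρF (s^2) ≤ u^2 := by
    have h9 : s - M * rG ≤ u := by rw [hu]; linarith
    have h10 : (s - M*rG)^2 ≤ u^2 := by
      have := pow_le_pow_left₀ hslb.le h9 2
      simpa using this
    have hexp3 : (s - M*rG)^2 = s^2 - M*(2*s*rG) + M^2*rG^2 := by ring
    have hMrGsq : 0 ≤ M^2*rG^2 := by positivity
    rw [hexp3, hkeyM] at h10
    linarith
  have hlowarg_pos : 0 ≤ s^2 + (-M) * ρF (s^2) := by
    have w : s * (M * rG) < s * (s/4) := mul_lt_mul_of_pos_left hq hs0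
    have w2 : M * ρF (s^2) = 2 * (s * (M * rG)) := by rw [← hkey]; ring
    linarith [w, w2, sq_nonneg s]
  have hm_low : s^2 + (-M)*ρF (s^2) ∈ Set.Ico (0:ℝ) δ :=
    ⟨hlowarg_pos, by linarith [mul_nonneg hM.le hρs_nn]⟩
  have hm_up : s^2 + (M+1)*ρF (s^2) ∈ Set.Ico (0:ℝ) δ :=
    ⟨by linarith [mul_nonneg (by linarith : (0:ℝ) ≤ M+1) hρs_nn, sq_nonneg s], hδu⟩
  have hm_u2 : u^2 ∈ Set.Ico (0:ℝ) δ := ⟨sq_nonneg u, lt_of_le_of_lt hu2_ub hδu⟩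
  have hm_s2 : s^2 ∈ Set.Ico (0:ℝ) δ := ⟨sq_nonneg s, hδs⟩
  have hnum_ub : ρF (u^2) ≤ ρF (s^2 + (M+1)*ρF (s^2)) := hρmono hm_u2 hm_up hu2_ub
  have hnum_lb : ρF (s^2 + (-M)*ρF (s^2)) ≤ ρF (u^2) := hρmono hm_low hm_u2 hu2_lb
  rw [Real.dist_eq, abs_lt] at h4 h5
  have h4' : ρF (s^2 + (M+1)*ρF (s^2)) < (1+ε₁) * ρF (s^2) :=
    (div_lt_iff₀ hρpos).1 (by linarith [h4.2])
  have h5' : (1-ε₁) * ρF (s^2) < ρF (s^2 + (-M)*ρF (s^2)) :=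
    (lt_div_iff₀ hρpos).1 (by linarith [h5.1])
  have hR_ub : ρF (u^2) / ρF (s^2) ≤ 1 + ε₁ := by
    rw [div_le_iff₀ hρpos]; linarith
  have hR_lb : 1 - ε₁ ≤ ρF (u^2) / ρF (s^2) := by
    rw [le_div_iff₀ hρpos]; linarith
  have hsu_ub : s/u ≤ 1 + ε₁ := by
    rw [div_le_iff₀ hupos, hu]
    have w1 : (1+ε₁)*(-M*rG) ≤ (1+ε₁)*(y*rG) :=
      mul_le_mul_of_nonneg_left hyrG_lb (by linarith)
    have w2 : (1+ε₁)*(M*rG) < (1+ε₁)*((ε₁/2)*s) :=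
      mul_lt_mul_of_pos_left h6' (by linarith)
    have w3 : ε₁*(ε₁*s) ≤ (1/2)*(ε₁*s) :=
      mul_le_mul_of_nonneg_right hε₁b (mul_nonneg hε₁.le hs0.le)
    linarith [w1, w2, w3]
  have hsu_lb : 1 - ε₁ ≤ s/u := by
    rw [le_div_iff₀ hupos, hu]
    have w1 : (1-ε₁)*(y*rG) ≤ (1-ε₁)*(M*rG) :=
      mul_le_mul_of_nonneg_left hyrG_ub (by linarith)
    have w2 : (1-ε₁)*(M*rG) ≤ 1*(M*rG) :=
      mul_le_mul_of_nonneg_right (by linarith) (mul_pos hM hrGpos).le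
    have w4 : 0 ≤ ε₁*s := mul_nonneg hε₁.le hs0.le
    linarith [w1, w2, w4, h6']
  have hfid : (ρF (u^2) / (2*u)) / rG = (s/u) * (ρF (u^2)/ρF (s^2)) := by
    rw [hrG]
    simp only [div_eq_mul_inv, mul_inv, inv_inv]
    ring
  have hρu2nn : 0 ≤ ρF (u^2) := hρnn _ hm_u2
  have hprod_ub : (s/u) * (ρF (u^2)/ρF (s^2)) ≤ (1+ε₁)*(1+ε₁) :=
    mul_le_mul hsu_ub hR_ub (div_nonneg hρu2nn hρpos.le) (by linarith)
  have hprod_lb : (1-ε₁)*(1-ε₁) ≤ (s/u) * (ρF (u^2)/ρF (s^2)) :=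
    mul_le_mul hsu_lb hR_lb (by linarith) (div_nonneg hs0.le hupos.le)
  show dist (1:ℝ) ((ρF (u^2) / (2*u)) / rG) < ε
  have q0 : ε₁*ε₁ ≤ ε₁*1 := mul_le_mul_of_nonneg_left (by linarith) hε₁.le
  have q1 : (1+ε₁)*(1+ε₁) ≤ 1 + 3*ε₁ := by linarith [q0]
  have q2 : 1 - 2*ε₁ ≤ (1-ε₁)*(1-ε₁) := by linarith [mul_self_nonneg ε₁]
  rw [hfid, Real.dist_eq, abs_lt]
  constructor <;> linarith [hprod_ub, hprod_lb, q1, q2]
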